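/- Let Δ be a thin pure simplicial complex of rank n. For every flag F of Δ, we have T(R(T(F))) = R(F), where T is the zigzag operator and R is the flag-reversal operator. -/

import Mathlib

open scoped Classical

variable {V : Type*}

/-- `C` is a facet (maximal face) of a pure rank-`n` complex: a face with `n` vertices. -/
def IsFacet (n : ℕ) (faces : Finset V → Prop) (C : Finset V) : Prop :=
  faces C ∧ C.card = n

/-- `faces` describes a thin pure simplicial complex of rank `n` over the vertex set `V`:
it is downward closed, every singleton is a face, every face has at most `n` vertices and is
contained in a facet, and every ridge (face with `n - 1` vertices) lies in exactly two facets. -/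
def IsThinComplex (n : ℕ) (faces : Finset V → Prop) : Prop :=
  (∀ v : V, faces {v}) ∧
  (∀ ⦃X Y : Finset V⦄, faces X → Y ⊆ X → faces Y) ∧
  (∀ ⦃X : Finset V⦄, faces X → X.card ≤ n) ∧
  (∀ ⦃X : Finset V⦄, faces X → ∃ C : Finset V, IsFacet n faces C ∧ X ⊆ C) ∧
  (∀ ⦃R : Finset V⦄, faces R → R.card = n - 1 →
    {C : Finset V | IsFacet n faces C ∧ R ⊆ C}.ncard = 2)

/-- A flag, encoded by the ordered vertex sequence `x_0, …, x_{n-1}` determining it: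
the chain of faces is `{x_0} ⊂ {x_0,x_1} ⊂ … ⊂ {x_0,…,x_{n-1}}`, the top being a facet. -/
def IsFlag (n : ℕ) (faces : Finset V → Prop) (F : List V) : Prop :=
  F.length = n ∧ F.Nodup ∧ faces F.toFinset

/-- `G = T(F)` for the zigzag operator `T = σ_{n-1} ∘ ⋯ ∘ σ_0`: if `F` is determined by the
vertex sequence `x_0, x_1, …, x_{n-1}`, then `T(F)` is determined by `x_1, …, x_{n-1}, y` with
`y ≠ x_0`. -/
def TStep (n : ℕ) (faces : Finset V → Prop) (F G : List V) : Prop :=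
  IsFlag n faces F ∧ IsFlag n faces G ∧
    ∃ y : V, G = F.tail ++ [y] ∧ F.head? ≠ some y

/-- A zigzag of length `l`: the orbit `F, T F, T² F, …` of the operator `T` on flags, recorded
as the sequence `i ↦ Tⁱ F`; it is `l`-periodic with `l` the minimal period. -/
def IsZigzag (n : ℕ) (faces : Finset V → Prop) (l : ℕ) (F : ℕ → List V) : Prop :=
  0 < l ∧ (∀ i : ℕ, TStep n faces (F i) (F (i + 1))) ∧ (∀ i : ℕ, F (i + l) = F i) ∧
    ∀ m : ℕ, 0 < m → (∀ i : ℕ, F (i + m) = F i) → l ≤ m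

/-- The set of flags of a zigzag together with those of its reverse zigzag; two zigzags are
identified (a zigzag is identified with its reverse, and with its cyclic shifts) exactly when
these sets coincide. -/
def ZigzagClass (F : ℕ → List V) : Set (List V) :=
  Set.range F ∪ Set.range fun i => (F i).reverse

/-- `G = σ_i(F)`: the flag `G` has the same `j`-faces as `F` for all `j ≠ i`, and a different
`i`-face (the `j`-face of the flag with vertex sequence `F` is `(F.take (j+1)).toFinset`). -/
def SigmaStep (n : ℕ) (faces : Finset V → Prop) (i : ℕ) (F G : List V) : Prop :=
  IsFlag n faces F ∧ IsFlag n faces G ∧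
    (∀ j : ℕ, j < n → j ≠ i → (G.take (j + 1)).toFinset = (F.take (j + 1)).toFinset) ∧
    (G.take (i + 1)).toFinset ≠ (F.take (i + 1)).toFinset

/-- `G = T_δ(F)` where `T_δ = σ_{δ(n-1)} ∘ ⋯ ∘ σ_{δ(0)}`. -/
def TDeltaStep (n : ℕ) (faces : Finset V → Prop) (δ : Equiv.Perm (Fin n))
    (F G : List V) : Prop :=
  ∃ c : ℕ → List V, c 0 = F ∧ c n = G ∧
    ∀ i : Fin n, SigmaStep n faces (δ i) (c i) (c (i + 1))

/-- A generalized zigzag (δ-zigzag) of length `l`: the orbit of `T_δ` on flags. -/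
def IsGenZigzag (n : ℕ) (faces : Finset V → Prop) (δ : Equiv.Perm (Fin n)) (l : ℕ)
    (F : ℕ → List V) : Prop :=
  0 < l ∧ (∀ i : ℕ, TDeltaStep n faces δ (F i) (F (i + 1))) ∧ (∀ i : ℕ, F (i + l) = F i) ∧
    ∀ m : ℕ, 0 < m → (∀ i : ℕ, F (i + m) = F i) → l ≤ m

/-- Adjacency in the facet-adjacency graph `Γ_{n-1}(Δ)`: two distinct facets meeting in a ridge. -/
def FacetAdj (n : ℕ) (faces : Finset V → Prop) (C D : Finset V) : Prop :=
  IsFacet n faces C ∧ IsFacet n faces D ∧ C ≠ D ∧ (C ∩ D).card = n - 1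

/-- `p 0, p 1, …, p m` is a path in the facet-adjacency graph. -/
def IsFacetPath (n : ℕ) (faces : Finset V → Prop) (m : ℕ) (p : ℕ → Finset V) : Prop :=
  ∀ i : ℕ, i < m → FacetAdj n faces (p i) (p (i + 1))

/-- The path distance in the facet-adjacency graph `Γ_{n-1}(Δ)`. -/
noncomputable def facetDist (n : ℕ) (faces : Finset V → Prop) (X Y : Finset V) : ℕ :=
  sInf {m : ℕ | ∃ p : ℕ → Finset V, p 0 = X ∧ p m = Y ∧ IsFacetPath n faces m p}

/-- The complex is a chamber complex: the facet-adjacency graph is connected. -/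
def ChamberConnected (n : ℕ) (faces : Finset V → Prop) : Prop :=
  ∀ C D : Finset V, IsFacet n faces C → IsFacet n faces D →
    ∃ (m : ℕ) (p : ℕ → Finset V), p 0 = C ∧ p m = D ∧ IsFacetPath n faces m p

/-- In a thin pure simplicial complex of rank `n`, `T(R(T(F))) = R(F)` for every
flag `F`, where `R` reverses the defining vertex sequence of a flag. -/
theorem stmt0 (n : ℕ) (faces : Finset V → Prop) (hΔ : IsThinComplex n faces)
    (F G H : List V) (hFG : TStep n faces F G) (hGH : TStep n faces G.reverse H) :
    H = F.reverse := by
  obtain ⟨hF, hG, y, hGeq, hy⟩ := hFG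
  obtain ⟨hGr, hH, z, hHeq, hz⟩ := hGH
  obtain ⟨x, F', rfl⟩ : ∃ x F', F = x :: F' := by
    cases F with
    | nil =>
      exfalso
      have h1 := hF.1
      have h2 := hG.1
      simp only [List.tail_nil, List.nil_append] at hGeq
      rw [hGeq] at h2
      simp at h1 h2
      omega
    | cons a l => exact ⟨a, l, rfl⟩
  simp only [List.tail_cons] at hGeq
  have hGrev : G.reverse = y :: F'.reverse := by
    rw [hGeq]; simp
  rw [hGrev] at hHeq hz
  simp only [List.tail_cons, List.head?_cons, Ne, Option.some.injEq] at hHeq hz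
  have hxy : x ≠ y := by
    simp only [List.head?_cons, Ne, Option.some.injEq] at hy
    exact hy
  -- basic facts
  obtain ⟨hFlen, hFnd, hFface⟩ := hF
  obtain ⟨hGlen, hGnd, hGface⟩ := hG
  obtain ⟨hHlen, hHnd, hHface⟩ := hH
  have hF'len : F'.length = n - 1 := by simp at hFlen; omega
  have hn : 1 ≤ n := by simp at hFlen; omega
  obtain ⟨hsing, hdown, hcard, hfacet, hthin⟩ := hΔ
  -- ridge
  set R : Finset V := F'.toFinset with hR
  have hF'nd : F'.Nodup := (List.nodup_cons.mp hFnd).2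
  have hRcard : R.card = n - 1 := by
    rw [hR, List.toFinset_card_of_nodup hF'nd]; exact hF'len
  have hRsub : R ⊆ (x :: F').toFinset := by simp [hR, Finset.subset_insert]
  have hRface : faces R := hdown hFface hRsub
  have hncard := hthin hRface hRcard
  -- the three facets
  have hFfacet : IsFacet n faces (x :: F').toFinset :=
    ⟨hFface, by rw [List.toFinset_card_of_nodup hFnd]; exact hFlen⟩
  have hGfacet : IsFacet n faces G.toFinset :=
    ⟨hGface, by rw [List.toFinset_card_of_nodup hGnd]; exact hGlen⟩
  have hHfacet : IsFacet n faces H.toFinset :=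
    ⟨hHface, by rw [List.toFinset_card_of_nodup hHnd]; exact hHlen⟩
  have hGset : G.toFinset = insert y R := by
    rw [hGeq]; ext a; simp [hR, or_comm]
  have hHset : H.toFinset = insert z R := by
    rw [hHeq]; ext a; simp [hR, or_comm]
  have hFset : (x :: F').toFinset = insert x R := by simp [hR]
  -- membership in the set of facets containing R
  have hFmem : (x :: F').toFinset ∈ {C : Finset V | IsFacet n faces C ∧ R ⊆ C} :=
    ⟨hFfacet, hRsub⟩
  have hGmem : G.toFinset ∈ {C : Finset V | IsFacet n faces C ∧ R ⊆ C} :=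
    ⟨hGfacet, by rw [hGset]; exact Finset.subset_insert _ _⟩
  have hHmem : H.toFinset ∈ {C : Finset V | IsFacet n faces C ∧ R ⊆ C} :=
    ⟨hHfacet, by rw [hHset]; exact Finset.subset_insert _ _⟩
  -- nonmembership of vertices
  have hyR : y ∉ R := by
    intro hmem
    have h := hGnd
    rw [hGeq] at h
    simp [List.nodup_append] at h
    exact h.2 _ (List.mem_toFinset.mp hmem) rfl
  have hzR : z ∉ R := by
    intro hmem
    have h := hHnd
    rw [hHeq] at h
    simp [List.nodup_append] at h
    exact h.2 _ (List.mem_toFinset.mp hmem) rfl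
  have hxR : x ∉ R := by
    intro hmem
    exact (List.nodup_cons.mp hFnd).1 (List.mem_toFinset.mp hmem)
  have hHG : H.toFinset ≠ G.toFinset := by
    rw [hHset, hGset]
    intro heq
    have : z ∈ insert y R := heq ▸ Finset.mem_insert_self z R
    rcases Finset.mem_insert.mp this with h | h
    · exact hz h.symm
    · exact hzR h
  have hGF : G.toFinset ≠ (x :: F').toFinset := by
    rw [hGset, hFset]
    intro heq
    have : y ∈ insert x R := heq ▸ Finset.mem_insert_self y R
    rcases Finset.mem_insert.mp this with h | h
    · exact hxy h.symm
    · exact hyR h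
  -- conclude H.toFinset = F.toFinset using ncard = 2
  obtain ⟨A, B, hAB, hset⟩ := Set.ncard_eq_two.mp hncard
  rw [hset] at hFmem hGmem hHmem
  have hHF : H.toFinset = (x :: F').toFinset := by
    rcases hHmem with h1 | h1 <;> rcases hGmem with h2 | h2 <;>
      rcases hFmem with h3 | h3 <;> simp_all
  have hzx : z = x := by
    have hzmem : z ∈ insert x R := by
      rw [← hFset, ← hHF, hHset]; exact Finset.mem_insert_self z R
    rcases Finset.mem_insert.mp hzmem with h | h
    · exact h
    · exact absurd h hzR
  rw [hHeq, hzx]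
  simp
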